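/- Define sequences of finite sets of rationals in [0,1] by V₀ = {0, 1} and, given V_m listed in increasing order as q₀ < q₁ < ... < q_{2^m} with q_i = a_i/b_i in lowest terms, let p_i = (a_{i-1} + a_i)/(b_{i-1} + b_i) (the mediant) and V_{m+1} = V_m ∪ {p₁, ..., p_{2^m}}. Then for every m and every consecutive pair q_{j-1} < q_j in V_m, one has q_j − q_{j-1} ≤ 1/(m+1). -/

import Mathlib

/-- The mediant of two rationals (written in lowest terms as `num/den`). -/
def mediant (q r : ℚ) : ℚ := ((q.num + r.num : ℤ) : ℚ) / (((q.den : ℤ) + (r.den : ℤ) : ℤ) : ℚ)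

/-- Insert the mediant between each pair of consecutive entries of a list. -/
def insertMediants : List ℚ → List ℚ
  | [] => []
  | [q] => [q]
  | q :: r :: l => q :: mediant q r :: insertMediants (r :: l)

/-- The Stern–Brocot (Farey mediant) subdivision of `[0,1]`: `V₀ = [0,1]`,
and `V_{m+1}` is obtained from `V_m` by inserting mediants. -/
def sternBrocot : ℕ → List ℚ
  | 0 => [0, 1]
  | m + 1 => insertMediants (sternBrocot m)

/-- Adjacency invariant at level `m`. -/
def Adj (m : ℕ) (q r : ℚ) : Prop :=
  (q.den : ℤ) * r.num - q.num * r.den = 1 ∧ ((m : ℤ) + 1) ≤ (q.den : ℤ) * r.den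

lemma mediant_num_den {q r : ℚ} (h : (q.den : ℤ) * r.num - q.num * r.den = 1) :
    (mediant q r).num = q.num + r.num ∧ ((mediant q r).den : ℤ) = q.den + r.den := by
  set a := q.num; set b := (q.den : ℤ); set c := r.num; set d := (r.den : ℤ)
  have hb : 0 < b := by positivity
  have hd : 0 < d := by positivity
  have hbd : 0 < b + d := by linarith
  have hcop : IsCoprime (a + c) (b + d) := ⟨b, -a, by ring_nf; linarith⟩
  have hcop' : Nat.Coprime (a + c).natAbs (b + d).natAbs :=
    Int.isCoprime_iff_gcd_eq_one.mp hcop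
  exact ⟨Rat.num_div_eq_of_coprime hbd hcop', Rat.den_div_eq_of_coprime hbd hcop'⟩

lemma adj_mediant {m : ℕ} {q r : ℚ} (h : Adj m q r) :
    Adj (m + 1) q (mediant q r) ∧ Adj (m + 1) (mediant q r) r := by
  obtain ⟨h1, h2⟩ := h
  obtain ⟨hn, hd⟩ := mediant_num_den h1
  have hb : (1 : ℤ) ≤ q.den := by exact_mod_cast q.pos
  have hdd : (1 : ℤ) ≤ r.den := by exact_mod_cast r.pos
  constructor <;> constructor <;> push_cast [hn, hd] <;> nlinarith

lemma adj_gap {m : ℕ} {q r : ℚ} (h : Adj m q r) : r - q ≤ 1 / ((m : ℚ) + 1) := by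
  obtain ⟨h1, h2⟩ := h
  have hq : (q.num : ℚ) / q.den = q := q.num_div_den
  have hr : (r.num : ℚ) / r.den = r := r.num_div_den
  have hb : (0 : ℚ) < q.den := by exact_mod_cast q.pos
  have hd : (0 : ℚ) < r.den := by exact_mod_cast r.pos
  have key : r - q = 1 / ((q.den : ℚ) * r.den) := by
    conv_lhs => rw [← hr, ← hq]
    rw [div_sub_div _ _ hd.ne' hb.ne']
    have hnum : (r.num : ℚ) * q.den - r.den * q.num = 1 := by
      have h1' : (((q.den : ℤ) * r.num - q.num * r.den : ℤ) : ℚ) = ((1 : ℤ) : ℚ) := by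
        exact_mod_cast congrArg (fun x : ℤ => (x : ℚ)) h1
      push_cast at h1' ⊢; linarith
    rw [hnum, mul_comm]
  rw [key]
  apply one_div_le_one_div_of_le (by positivity)
  exact_mod_cast h2

lemma insertMediants_cons (r : ℚ) (l : List ℚ) :
    ∃ t, insertMediants (r :: l) = r :: t := by
  cases l with
  | nil => exact ⟨[], rfl⟩
  | cons s l' => exact ⟨_, rfl⟩

lemma chain_insert (m : ℕ) : ∀ l : List ℚ, List.Chain' (Adj m) l →
    List.Chain' (Adj (m + 1)) (insertMediants l)
  | [], _ => List.isChain_nil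
  | [q], _ => List.isChain_singleton q
  | q :: r :: l, h => by
    replace h := List.isChain_cons_cons.mp h
    obtain ⟨hqr, hrest⟩ := h
    have ih := chain_insert m (r :: l) hrest
    obtain ⟨ha, hb⟩ := adj_mediant hqr
    show List.Chain' _ (q :: mediant q r :: insertMediants (r :: l))
    obtain ⟨t, ht⟩ := insertMediants_cons r l
    rw [ht] at ih ⊢
    exact List.isChain_cons_cons.mpr ⟨ha, List.isChain_cons_cons.mpr ⟨hb, ih⟩⟩

lemma sternBrocot_chain (m : ℕ) : List.Chain' (Adj m) (sternBrocot m) := by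
  induction m with
  | zero =>
      show List.Chain' (Adj 0) [0, 1]
      refine List.isChain_cons_cons.mpr ⟨⟨?_, ?_⟩, List.isChain_singleton 1⟩ <;> norm_num
  | succ m ih => exact chain_insert m _ ih

/-- Consecutive elements of the level-`m` Stern–Brocot subdivision of `[0,1]`
differ by at most `1/(m+1)`. -/
theorem sternBrocot_gap (m j : ℕ) (hj : j + 1 < (sternBrocot m).length) :
    (sternBrocot m).get ⟨j + 1, hj⟩ - (sternBrocot m).get ⟨j, Nat.lt_of_succ_lt hj⟩
      ≤ 1 / ((m : ℚ) + 1) := by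
  have h := (List.isChain_iff_getElem.mp (sternBrocot_chain m)) j (by omega)
  exact adj_gap h
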